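/- Let f : [a,b] → ℝ be Hölder continuous of order r ∈ (0,1] with constant H, and u : [a,b] → ℝ of bounded variation. Then for all y ∈ [a, (a+b)/2], |∫ₐᵇ f du − [u((a+b)/2) − u(a)]·f(y) − [u(b) − u((a+b)/2)]·f(a+b−y)| ≤ H · ((b−a)/4 + |y − (3a+b)/4|)^r · V(u;[a,b]). -/

import Mathlib

/-- A tagged partition of the interval `[a, b]`. -/
structure TaggedPartition (a b : ℝ) where
  n : ℕ
  pts : ℕ → ℝ
  tag : ℕ → ℝ
  mono : ∀ i, pts i ≤ pts (i + 1)
  first : pts 0 = a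
  last : pts n = b
  tag_mem : ∀ i, pts i ≤ tag i ∧ tag i ≤ pts (i + 1)

/-- The Riemann–Stieltjes sum of `f` with respect to `u` over a tagged partition. -/
def RSsum (f u : ℝ → ℝ) {a b : ℝ} (P : TaggedPartition a b) : ℝ :=
  ∑ i ∈ Finset.range P.n, f (P.tag i) * (u (P.pts (i + 1)) - u (P.pts i))

/-- `IsRSIntegral f u a b I` means the Riemann–Stieltjes integral `∫ₐᵇ f du` exists
and equals `I`: Riemann–Stieltjes sums converge to `I` as the mesh tends to `0`. -/
def IsRSIntegral (f u : ℝ → ℝ) (a b I : ℝ) : Prop :=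
  ∀ ε > 0, ∃ δ > 0, ∀ P : TaggedPartition a b,
    (∀ i < P.n, P.pts (i + 1) - P.pts i < δ) → |RSsum f u P - I| < ε

/-- The total (Jordan) variation of `u` on `[a, b]`. -/
noncomputable def totalVar (u : ℝ → ℝ) (a b : ℝ) : ℝ :=
  (eVariationOn u (Set.Icc a b)).toReal

/-- A partition sum of increments is bounded by the total variation. -/
lemma sum_abs_le_totalVar (u : ℝ → ℝ) {a b : ℝ}
    (hu : BoundedVariationOn u (Set.Icc a b)) (n : ℕ) (p : ℕ → ℝ)
    (hmono : MonotoneOn p (Set.Iic n)) (hmem : ∀ i ≤ n, p i ∈ Set.Icc a b) :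
    ∑ i ∈ Finset.range n, |u (p (i + 1)) - u (p i)| ≤ totalVar u a b := by
  have key := eVariationOn.sum_le_of_monotoneOn_Iic (f := u) hmono hmem
  have h1 : ∑ i ∈ Finset.range n, edist (u (p (i + 1))) (u (p i))
      = ENNReal.ofReal (∑ i ∈ Finset.range n, |u (p (i + 1)) - u (p i)|) := by
    rw [ENNReal.ofReal_sum_of_nonneg (fun i _ => abs_nonneg _)]
    refine Finset.sum_congr rfl fun i _ => ?_
    rw [edist_dist, Real.dist_eq]
  rw [h1] at key
  exact (ENNReal.ofReal_le_iff_le_toReal hu).mp key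

theorem two_point_midpoint_bounded_variation
    (a b H r y I : ℝ) (f u : ℝ → ℝ)
    (hr : 0 < r) (hr1 : r ≤ 1) (hH : 0 ≤ H)
    (hf : ∀ s ∈ Set.Icc a b, ∀ t ∈ Set.Icc a b, |f s - f t| ≤ H * |s - t| ^ r)
    (hu : BoundedVariationOn u (Set.Icc a b))
    (hy : y ∈ Set.Icc a ((a + b) / 2))
    (hI : IsRSIntegral f u a b I) :
    |I - (u ((a + b) / 2) - u a) * f y - (u b - u ((a + b) / 2)) * f (a + b - y)| ≤
      H * ((b - a) / 4 + |y - (3 * a + b) / 4|) ^ r * totalVar u a b := by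
  obtain ⟨hay, hym⟩ := hy
  have hab : a ≤ b := by linarith
  set m : ℝ := (a + b) / 2 with hm
  set K : ℝ := (b - a) / 4 + |y - (3 * a + b) / 4| with hK
  set S : ℝ := (u m - u a) * f y + (u b - u m) * f (a + b - y) with hS
  set V : ℝ := totalVar u a b with hV
  have hK0 : 0 ≤ K := by
    have := abs_nonneg (y - (3 * a + b) / 4); rw [hK]; linarith
  have hVnn : 0 ≤ V := ENNReal.toReal_nonneg
  -- K bounds
  have hKy : ∀ t ∈ Set.Icc a m, |t - y| ≤ K := by
    intro t ht
    rw [abs_le, hK]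
    rcases abs_cases (y - (3 * a + b) / 4) with ⟨h, _⟩ | ⟨h, _⟩ <;>
      constructor <;> simp only [hm] at * <;> cases ht <;> linarith
  have hKy' : ∀ t ∈ Set.Icc m b, |t - (a + b - y)| ≤ K := by
    intro t ht
    rw [abs_le, hK]
    rcases abs_cases (y - (3 * a + b) / 4) with ⟨h, _⟩ | ⟨h, _⟩ <;>
      constructor <;> simp only [hm] at * <;> cases ht <;> linarith
  -- main: for each ε > 0
  have main : ∀ ε > 0, |I - S| ≤ H * K ^ r * V + ε := by
    intro ε hε
    obtain ⟨δ, hδ, hP⟩ := hI ε hε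
    -- choose N
    obtain ⟨N', hN'⟩ := exists_nat_gt ((b - a) / δ)
    set N : ℕ := max 1 N' with hN
    have hN1 : 1 ≤ N := le_max_left _ _
    have hNpos : (0 : ℝ) < 2 * N := by positivity
    have hmesh : (b - a) / (2 * N) < δ := by
      rw [div_lt_iff₀ hNpos]
      have h1 : (b - a) / δ < N := lt_of_lt_of_le hN' (by exact_mod_cast le_max_right 1 N')
      have h2 : b - a < N * δ := by rwa [div_lt_iff₀ hδ] at h1
      have hNr : (0:ℝ) ≤ (N:ℝ) := Nat.cast_nonneg N
      nlinarith
    -- build the partition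
    set c : ℝ := (b - a) / (2 * N) with hc
    have hc0 : 0 ≤ c := div_nonneg (by linarith) hNpos.le
    set p : ℕ → ℝ := fun i => a + min i (2 * N) * c with hp
    have hp2N : ∀ i, i ≤ 2 * N → p i = a + i * c := by
      intro i hi
      have hmin : i ⊓ (2 * N) = i := min_eq_left hi
      show a + ((i ⊓ (2 * N) : ℕ) : ℝ) * c = a + i * c
      rw [hmin]
    have hplast : p (2 * N) = b := by
      rw [hp2N _ le_rfl, hc]
      field_simp
      push_cast; ring
    have hpmono : ∀ i, p i ≤ p (i + 1) := by
      intro i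
      have h : ((i ⊓ (2 * N) : ℕ) : ℝ) ≤ (((i + 1) ⊓ (2 * N) : ℕ) : ℝ) :=
        Nat.cast_le.mpr (min_le_min (Nat.le_succ i) le_rfl)
      simp only [hp]
      exact add_le_add le_rfl (mul_le_mul_of_nonneg_right h hc0)
    have hpMono : Monotone p := monotone_nat_of_le_succ hpmono
    set P : TaggedPartition a b :=
      ⟨2 * N, p, p, hpmono, by simp [hp], hplast, fun i => ⟨le_rfl, hpmono i⟩⟩ with hPdef
    have hfine : ∀ i < P.n, P.pts (i + 1) - P.pts i < δ := by
      intro i hi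
      have hi2 : i < 2 * N := hi
      have h1 : P.pts (i + 1) = a + (i + 1) * c := by
        show p (i + 1) = _
        rw [hp2N _ (by omega)]; push_cast; ring
      have h2 : P.pts i = a + i * c := hp2N i (by omega)
      rw [h1, h2]
      have : a + (i + 1) * c - (a + i * c) = c := by ring
      rw [this]; exact hmesh
    have hnear := hP P hfine
    -- membership of points
    have hpmem : ∀ i, i ≤ 2 * N → p i ∈ Set.Icc a b := by
      intro i hi
      constructor
      · have := hpMono (Nat.zero_le i); simpa [hp] using this
      · have := hpMono hi; rwa [hplast] at this
    -- p N = m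
    have hpN : p N = m := by
      rw [hp2N N (by omega), hc, hm]
      field_simp; ring
    -- telescoping identity for S
    set g : ℕ → ℝ := fun i => if i < N then f y else f (a + b - y) with hg
    have tele : ∀ (k l : ℕ), ∑ i ∈ Finset.range k, (u (p (l + i + 1)) - u (p (l + i)))
        = u (p (l + k)) - u (p l) := by
      intro k l
      induction k with
      | zero => simp
      | succ k ih =>
        rw [Finset.sum_range_succ, ih]
        have : l + (k + 1) = l + k + 1 := by omega
        rw [this]; ring
    have hSsum : ∑ i ∈ Finset.range (2 * N), g i * (u (p (i + 1)) - u (p i)) = S := by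
      have hsplit : Finset.range (2 * N) = Finset.range N ∪ (Finset.range (2*N)).filter (fun i => ¬ i < N) := by
        ext i
        simp only [Finset.mem_union, Finset.mem_range, Finset.mem_filter, not_lt]
        omega
      rw [Finset.range_eq_Ico, ← Finset.sum_Ico_consecutive _ (Nat.zero_le N) (by omega : N ≤ 2 * N)]
      have h1 : ∑ i ∈ Finset.Ico 0 N, g i * (u (p (i + 1)) - u (p i))
          = f y * (u (p N) - u (p 0)) := by
        rw [← Finset.range_eq_Ico]
        have hc : ∀ i ∈ Finset.range N, g i * (u (p (i + 1)) - u (p i))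
            = f y * (u (p (i + 1)) - u (p i)) := by
          intro i hi
          rw [Finset.mem_range] at hi
          rw [hg]; simp [hi]
        rw [Finset.sum_congr rfl hc, ← Finset.mul_sum]
        congr 1
        have := tele N 0; simpa using this
      have h2 : ∑ i ∈ Finset.Ico N (2 * N), g i * (u (p (i + 1)) - u (p i))
          = f (a + b - y) * (u (p (2 * N)) - u (p N)) := by
        rw [Finset.sum_Ico_eq_sum_range]
        have : ∀ i ∈ Finset.range (2 * N - N), g (N + i) * (u (p (N + i + 1)) - u (p (N + i)))
            = f (a + b - y) * (u (p (N + i + 1)) - u (p (N + i))) := by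
          intro i _
          rw [hg]; simp [Nat.not_lt.mpr (Nat.le_add_right N i)]
        rw [Finset.sum_congr rfl this, ← Finset.mul_sum]
        congr 1
        have h2N : N + (2 * N - N) = 2 * N := by omega
        rw [tele (2 * N - N) N, h2N]
      rw [h1, h2, hpN, hplast, hS]
      have : p 0 = a := by simp [hp]
      rw [this]; ring
    -- estimate |RSsum - S|
    have hterm : ∀ i ∈ Finset.range (2 * N), |f (p i) - g i| ≤ H * K ^ r := by
      intro i hi
      rw [Finset.mem_range] at hi
      have hpi : p i ∈ Set.Icc a b := hpmem i (by omega)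
      by_cases hiN : i < N
      · have hg' : g i = f y := by rw [hg]; simp [hiN]
        rw [hg']
        have hyab : y ∈ Set.Icc a b := ⟨hay, by linarith⟩
        calc |f (p i) - f y| ≤ H * |p i - y| ^ r := hf _ hpi _ hyab
          _ ≤ H * K ^ r := by
            apply mul_le_mul_of_nonneg_left _ hH
            exact Real.rpow_le_rpow (abs_nonneg _) (hKy (p i) ⟨hpi.1, by
              have := hpMono (le_of_lt hiN); rwa [hpN] at this⟩) (le_of_lt hr)
      · have hg' : g i = f (a + b - y) := by rw [hg]; simp [hiN]
        rw [hg']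
        have haby : a + b - y ∈ Set.Icc a b := ⟨by simp only [hm] at hym; linarith, by linarith⟩
        calc |f (p i) - f (a + b - y)| ≤ H * |p i - (a + b - y)| ^ r := hf _ hpi _ haby
          _ ≤ H * K ^ r := by
            apply mul_le_mul_of_nonneg_left _ hH
            refine Real.rpow_le_rpow (abs_nonneg _) (hKy' (p i) ⟨?_, hpi.2⟩) (le_of_lt hr)
            have := hpMono (Nat.le_of_not_lt hiN); rwa [hpN] at this
    have hvar : ∑ i ∈ Finset.range (2 * N), |u (p (i + 1)) - u (p i)| ≤ V :=
      sum_abs_le_totalVar u hu (2 * N) p (hpMono.monotoneOn _) hpmem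
    have hRS : |RSsum f u P - S| ≤ H * K ^ r * V := by
      rw [← hSsum]
      have : RSsum f u P - ∑ i ∈ Finset.range (2 * N), g i * (u (p (i + 1)) - u (p i))
          = ∑ i ∈ Finset.range (2 * N), (f (p i) - g i) * (u (p (i + 1)) - u (p i)) := by
        rw [RSsum, ← Finset.sum_sub_distrib]
        apply Finset.sum_congr rfl
        intro i _
        ring
      rw [this]
      calc |∑ i ∈ Finset.range (2 * N), (f (p i) - g i) * (u (p (i + 1)) - u (p i))|
          ≤ ∑ i ∈ Finset.range (2 * N), |(f (p i) - g i) * (u (p (i + 1)) - u (p i))| :=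
            Finset.abs_sum_le_sum_abs _ _
        _ ≤ ∑ i ∈ Finset.range (2 * N), H * K ^ r * |u (p (i + 1)) - u (p i)| := by
            apply Finset.sum_le_sum
            intro i hi
            rw [abs_mul]
            exact mul_le_mul_of_nonneg_right (hterm i hi) (abs_nonneg _)
        _ = H * K ^ r * ∑ i ∈ Finset.range (2 * N), |u (p (i + 1)) - u (p i)| := by
            rw [Finset.mul_sum]
        _ ≤ H * K ^ r * V := by
            apply mul_le_mul_of_nonneg_left hvar
            positivity
    calc |I - S| = |(RSsum f u P - S) - (RSsum f u P - I)| := by congr 1; ring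
      _ ≤ |RSsum f u P - S| + |RSsum f u P - I| := abs_sub _ _
      _ ≤ H * K ^ r * V + ε := add_le_add hRS (le_of_lt hnear)
  have := le_of_forall_pos_le_add main
  calc |I - (u m - u a) * f y - (u b - u m) * f (a + b - y)| = |I - S| := by
        rw [hS]; ring_nf
    _ ≤ H * K ^ r * V := this
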